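/- Let K_1, …, K_d ∈ C^{n×n}. Define, for any v ∈ C^d, K_v = ∑_j v_j K_j. Then sup over v with ‖v‖ ≤ 1 of (1/2)λ_min(K_v + K_v†) is at most (1/n)√(∑_{j=1}^d |Tr K_j|²). -/

import Mathlib

open Matrix

/-- The trace of a Hermitian matrix equals the sum of its eigenvalues. -/
lemma trace_eq_sum_eig {n : ℕ} (A : Matrix (Fin n) (Fin n) ℂ) (hA : A.IsHermitian) :
    A.trace = ∑ i, (hA.eigenvalues i : ℂ) := by
  exact hA.trace_eq_sum_eigenvalues

/-- The smallest eigenvalue of a Hermitian matrix. -/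
noncomputable def lammin {n : ℕ} (A : Matrix (Fin n) (Fin n) ℂ) (hA : A.IsHermitian) : ℝ :=
  ⨅ i, hA.eigenvalues i

/-- For any `K_1, …, K_d` and any `v` with `‖v‖ ≤ 1`, writing `K_v = ∑_j v_j K_j`,
`(1/2) λ_min(K_v + K_vᴴ) ≤ (1/n) √(∑_j |Tr K_j|²)`; hence the supremum over such `v` is at
most this bound. -/
theorem half_lammin_le_sqrt_sum_trace_sq (n d : ℕ) (hn : 0 < n)
    (K : Fin d → Matrix (Fin n) (Fin n) ℂ)
    (v : Fin d → ℂ) (hv : ∑ j, ‖v j‖ ^ 2 ≤ 1) :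
    (1 / 2) * lammin ((∑ j, v j • K j) + (∑ j, v j • K j)ᴴ)
        (Matrix.isHermitian_add_transpose_self _)
      ≤ (1 / n) * Real.sqrt (∑ j, ‖Matrix.trace (K j)‖ ^ 2) := by
  haveI : NeZero n := ⟨hn.ne'⟩
  set A := (∑ j, v j • K j) + (∑ j, v j • K j)ᴴ with hAdef
  set hA := Matrix.isHermitian_add_transpose_self (∑ j, v j • K j)
  set T : ℂ := ∑ j, v j * (K j).trace with hT
  -- trace computation
  have htrace : A.trace = T + starRingEnd ℂ T := by
    simp [hAdef, Matrix.trace_add, Matrix.trace_conjTranspose, Matrix.trace_sum,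
      Matrix.trace_smul, hT, smul_eq_mul, map_sum]
  have hsum : (∑ i, hA.eigenvalues i) = 2 * T.re := by
    have := congrArg Complex.re (trace_eq_sum_eig A hA)
    rw [htrace] at this
    simp at this
    linarith [this]
  -- lammin ≤ average
  have hle : (n : ℝ) * lammin A hA ≤ ∑ i, hA.eigenvalues i := by
    have : ∀ i, lammin A hA ≤ hA.eigenvalues i := fun i =>
      ciInf_le (Finite.bddBelow_range _) i
    calc (n : ℝ) * lammin A hA = ∑ _i : Fin n, lammin A hA := by
          simp [Finset.sum_const, mul_comm]
      _ ≤ ∑ i, hA.eigenvalues i := Finset.sum_le_sum fun i _ => this i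
  -- Cauchy–Schwarz
  have hcs : T.re ≤ Real.sqrt (∑ j, ‖(K j).trace‖ ^ 2) := by
    have h1 : T.re ≤ ‖T‖ := Complex.re_le_norm T
    have h2 : ‖T‖ ≤ ∑ j, ‖v j‖ * ‖(K j).trace‖ := by
      calc ‖T‖ = ‖T‖ := rfl
        _ ≤ ∑ j, ‖v j * (K j).trace‖ := norm_sum_le _ _
        _ = _ := by simp [_root_.map_mul]
    have h3 : (∑ j, ‖v j‖ * ‖(K j).trace‖) ^ 2 ≤
        (∑ j, ‖v j‖ ^ 2) * ∑ j, ‖(K j).trace‖ ^ 2 :=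
      Finset.sum_mul_sq_le_sq_mul_sq _ _ _
    have hnn : (0:ℝ) ≤ ∑ j, ‖(K j).trace‖ ^ 2 :=
      Finset.sum_nonneg fun j _ => sq_nonneg _
    have h4 : (∑ j, ‖v j‖ * ‖(K j).trace‖) ^ 2 ≤
        ∑ j, ‖(K j).trace‖ ^ 2 := by
      calc _ ≤ (∑ j, ‖v j‖ ^ 2) * ∑ j, ‖(K j).trace‖ ^ 2 := h3
        _ ≤ 1 * ∑ j, ‖(K j).trace‖ ^ 2 := by
            apply mul_le_mul_of_nonneg_right hv hnn
        _ = _ := one_mul _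
    have h5 : ∑ j, ‖v j‖ * ‖(K j).trace‖ ≤
        Real.sqrt (∑ j, ‖(K j).trace‖ ^ 2) := by
      have := Real.sqrt_le_sqrt h4
      rwa [Real.sqrt_sq (Finset.sum_nonneg fun j _ =>
        mul_nonneg (norm_nonneg _) (norm_nonneg _))] at this
    linarith
  -- combine
  have hnpos : (0:ℝ) < n := by exact_mod_cast hn
  rw [div_mul_eq_mul_div, div_mul_eq_mul_div, one_mul, one_mul,
    div_le_div_iff₀ two_pos hnpos]
  calc lammin A hA * n = n * lammin A hA := mul_comm _ _
    _ ≤ ∑ i, hA.eigenvalues i := hle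
    _ = 2 * T.re := hsum
    _ ≤ Real.sqrt (∑ j, ‖(K j).trace‖ ^ 2) * 2 := by linarith
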